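/- Let Γ be a finitely generated group such that the rank of Γ (minimal number of generators) equals the rank of some finite quotient Q of Γ, and suppose Γ has the same set of finite quotients as a free group F of rank n. Then Γ ≅ F. -/

import Mathlib

/-- The rank of a group: the least cardinality of a (finite) generating set. -/
noncomputable def grpRank (G : Type*) [Group G] : ℕ :=
  sInf {n | ∃ S : Finset G, S.card = n ∧ Subgroup.closure (S : Set G) = ⊤}

lemma grpRank_le {G : Type*} [Group G] (S : Finset G)
    (h : Subgroup.closure (S : Set G) = ⊤) : grpRank G ≤ S.card :=
  Nat.sInf_le ⟨S, rfl, h⟩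

lemma exists_gen (G : Type*) [Group G] [Group.FG G] :
    ∃ S : Finset G, S.card = grpRank G ∧ Subgroup.closure (S : Set G) = ⊤ := by
  have hne : {n | ∃ S : Finset G, S.card = n ∧ Subgroup.closure (S : Set G) = ⊤}.Nonempty := by
    obtain ⟨m, S, _, hS⟩ := Group.fg_iff'.mp ‹Group.FG G›
    exact ⟨S.card, S, rfl, hS⟩
  exact Nat.sInf_mem hne

lemma grpRank_quotient_le {G H : Type*} [Group G] [Group H] [Group.FG G] (f : G →* H)
    (hf : Function.Surjective f) : grpRank H ≤ grpRank G := by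
  classical
  obtain ⟨S, hcard, hgen⟩ := exists_gen G
  have : Subgroup.closure ((S.image f : Finset H) : Set H) = ⊤ := by
    rw [Finset.coe_image, ← MonoidHom.map_closure, hgen]
    exact Subgroup.map_top_of_surjective f hf
  calc grpRank H ≤ (S.image f).card := grpRank_le _ this
    _ ≤ S.card := Finset.card_image_le
    _ = grpRank G := hcard

set_option maxHeartbeats 1000000 in
lemma freeGroup_rf {α : Type} [DecidableEq α] (w : FreeGroup α) (hw : w ≠ 1) :
    ∃ (P : Type) (_ : Group P) (_ : Finite P) (ρ : FreeGroup α →* P), ρ w ≠ 1 := by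
  classical
  set l : List (α × Bool) := w.toWord with hl
  set L : ℕ := l.length with hLdef
  have hred : FreeGroup.reduce l = l := FreeGroup.reduce_toWord w
  have hLpos : 0 < L := by
    rcases Nat.eq_zero_or_pos L with h | h
    · exact absurd (FreeGroup.toWord_eq_nil_iff.mp (List.length_eq_zero_iff.mp h)) hw
    · exact h
  -- adjacency lemma: no two adjacent inverse letters
  have adj : ∀ (j : ℕ) (hj : j + 1 < L) (g : α) (b : Bool),
      l.get ⟨j, by omega⟩ = (g, b) → l.get ⟨j+1, hj⟩ = (g, !b) → False := by
    intro j hj g b h1 h2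
    have hdj : l.drop j = (g, b) :: (g, !b) :: l.drop (j+2) := by
      rw [List.drop_eq_getElem_cons (show j < l.length by omega)]
      rw [List.drop_eq_getElem_cons (show j+1 < l.length by omega)]
      have h1' : l[j]'(by omega) = (g, b) := h1
      have h2' : l[j+1]'(by omega) = (g, !b) := h2
      rw [h1', h2']
    apply @FreeGroup.reduce.not α _ False l (l.take j) (l.drop (j+2)) g b
    rw [hred]
    conv_lhs => rw [← List.take_append_drop j l]
    rw [hdj]
  -- source and target of each position
  have hsub1 : ∀ j : Fin L, L - 1 - (j : ℕ) < L + 1 := fun j => by omega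
  have hsub2 : ∀ j : Fin L, L - (j : ℕ) < L + 1 := fun j => by omega
  set src : Fin L → Fin (L+1) := fun j =>
    if (l.get j).2 then ⟨L - 1 - (j : ℕ), hsub1 j⟩ else ⟨L - (j : ℕ), hsub2 j⟩ with hsrc
  set tgt : Fin L → Fin (L+1) := fun j =>
    if (l.get j).2 then ⟨L - (j : ℕ), hsub2 j⟩ else ⟨L - 1 - (j : ℕ), hsub1 j⟩ with htgt
  have src_eq_t : ∀ j : Fin L, (l.get j).2 = true → src j = ⟨L - 1 - (j : ℕ), hsub1 j⟩ := by
    intro j hb; simp only [hsrc]; rw [if_pos hb]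
  have src_eq_f : ∀ j : Fin L, (l.get j).2 = false → src j = ⟨L - (j : ℕ), hsub2 j⟩ := by
    intro j hb; simp only [hsrc]; rw [if_neg (show ¬((l.get j).2 = true) by rw [hb]; exact Bool.false_ne_true)]
  have tgt_eq_t : ∀ j : Fin L, (l.get j).2 = true → tgt j = ⟨L - (j : ℕ), hsub2 j⟩ := by
    intro j hb; simp only [htgt]; rw [if_pos hb]
  have tgt_eq_f : ∀ j : Fin L, (l.get j).2 = false → tgt j = ⟨L - 1 - (j : ℕ), hsub1 j⟩ := by
    intro j hb; simp only [htgt]; rw [if_neg (show ¬((l.get j).2 = true) by rw [hb]; exact Bool.false_ne_true)]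
  have src_inj : ∀ j j' : Fin L, (l.get j).1 = (l.get j').1 → src j = src j' → j = j' := by
    intro j j' hg h
    have hisj := j.isLt
    have hisj' := j'.isLt
    cases hb : (l.get j).2 <;> cases hb' : (l.get j').2
    · rw [src_eq_f j hb, src_eq_f j' hb'] at h
      have hv := congrArg Fin.val h
      simp only at hv
      exact Fin.ext (by omega)
    · -- j false, j' true : L - j = L - 1 - j' so j = j'+1 ; letters j'=(g,true), j'+1=(g,false)
      exfalso
      rw [src_eq_f j hb, src_eq_t j' hb'] at h
      have hv := congrArg Fin.val h
      simp only at hv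
      have hj : (j : ℕ) = (j' : ℕ) + 1 := by omega
      refine adj j' (by omega) (l.get j').1 true ?_ ?_
      · exact Prod.ext rfl hb'
      · have he : (⟨(j' : ℕ) + 1, by omega⟩ : Fin L) = j := Fin.ext (show (j' : ℕ) + 1 = (j : ℕ) by omega)
        rw [he, Prod.ext_iff]
        exact ⟨hg, by rw [hb, Bool.not_true]⟩
    · exfalso
      rw [src_eq_t j hb, src_eq_f j' hb'] at h
      have hv := congrArg Fin.val h
      simp only at hv
      have hj' : (j' : ℕ) = (j : ℕ) + 1 := by omega
      refine adj j (by omega) (l.get j).1 true ?_ ?_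
      · exact Prod.ext rfl hb
      · have he : (⟨(j : ℕ) + 1, by omega⟩ : Fin L) = j' := Fin.ext (show (j : ℕ) + 1 = (j' : ℕ) by omega)
        rw [he, Prod.ext_iff]
        exact ⟨hg.symm, by rw [hb', Bool.not_true]⟩
    · rw [src_eq_t j hb, src_eq_t j' hb'] at h
      have hv := congrArg Fin.val h
      simp only at hv
      exact Fin.ext (by omega)
  have tgt_inj : ∀ j j' : Fin L, (l.get j).1 = (l.get j').1 → tgt j = tgt j' → j = j' := by
    intro j j' hg h
    have hisj := j.isLt
    have hisj' := j'.isLt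
    cases hb : (l.get j).2 <;> cases hb' : (l.get j').2
    · rw [tgt_eq_f j hb, tgt_eq_f j' hb'] at h
      have hv := congrArg Fin.val h
      simp only at hv
      exact Fin.ext (by omega)
    · -- j false ↦ L-1-j, j' true ↦ L-j' : equal means j' = j+1; letters j=(g,false), j+1=(g,true)
      exfalso
      rw [tgt_eq_f j hb, tgt_eq_t j' hb'] at h
      have hv := congrArg Fin.val h
      simp only at hv
      have hj' : (j' : ℕ) = (j : ℕ) + 1 := by omega
      refine adj j (by omega) (l.get j).1 false ?_ ?_
      · exact Prod.ext rfl hb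
      · have he : (⟨(j : ℕ) + 1, by omega⟩ : Fin L) = j' := Fin.ext (show (j : ℕ) + 1 = (j' : ℕ) by omega)
        rw [he, Prod.ext_iff]
        exact ⟨hg.symm, by rw [hb', Bool.not_false]⟩
    · exfalso
      rw [tgt_eq_t j hb, tgt_eq_f j' hb'] at h
      have hv := congrArg Fin.val h
      simp only at hv
      have hj : (j : ℕ) = (j' : ℕ) + 1 := by omega
      refine adj j' (by omega) (l.get j').1 false ?_ ?_
      · exact Prod.ext rfl hb'
      · have he : (⟨(j' : ℕ) + 1, by omega⟩ : Fin L) = j := Fin.ext (show (j' : ℕ) + 1 = (j : ℕ) by omega)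
        rw [he, Prod.ext_iff]
        exact ⟨hg, by rw [hb, Bool.not_false]⟩
    · rw [tgt_eq_t j hb, tgt_eq_t j' hb'] at h
      have hv := congrArg Fin.val h
      simp only at hv
      exact Fin.ext (by omega)
  -- the permutations
  have srcG_inj : ∀ g : α, Function.Injective
      (fun j : {j : Fin L // (l.get j).1 = g} => src j.1) := by
    intro g j j' h
    exact Subtype.ext (src_inj j.1 j'.1 (j.2.trans j'.2.symm) h)
  have tgtG_inj : ∀ g : α, Function.Injective
      (fun j : {j : Fin L // (l.get j).1 = g} => tgt j.1) := by
    intro g j j' h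
    exact Subtype.ext (tgt_inj j.1 j'.1 (j.2.trans j'.2.symm) h)
  set σ : α → Equiv.Perm (Fin (L+1)) := fun g =>
    Equiv.extendSubtype
      (((Equiv.ofInjective _ (srcG_inj g)).symm.trans (Equiv.ofInjective _ (tgtG_inj g)))) with hσ
  have main : ∀ j : Fin L, σ (l.get j).1 (src j) = tgt j := by
    intro j
    have hmem : src j ∈ Set.range
        (fun j' : {j' : Fin L // (l.get j').1 = (l.get j).1} => src j'.1) := ⟨⟨j, rfl⟩, rfl⟩
    simp only [hσ]
    rw [Equiv.extendSubtype_apply_of_mem _ _ hmem]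
    have h1 : (⟨src j, hmem⟩ : {x // x ∈ Set.range
        (fun j' : {j' : Fin L // (l.get j').1 = (l.get j).1} => src j'.1)}) =
        Equiv.ofInjective _ (srcG_inj (l.get j).1) ⟨j, rfl⟩ := Subtype.ext rfl
    rw [Equiv.trans_apply, h1, Equiv.symm_apply_apply]
    rfl
  -- evaluation of one letter
  have step : ∀ j : Fin L,
      (cond (l.get j).2 (σ (l.get j).1) (σ (l.get j).1)⁻¹) ⟨L - 1 - (j:ℕ), hsub1 j⟩ =
        ⟨L - (j:ℕ), hsub2 j⟩ := by
    intro j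
    have hm := main j
    cases hb : (l.get j).2 with
    | false =>
      rw [src_eq_f j hb, tgt_eq_f j hb] at hm
      simp only [cond_false]
      rw [Equiv.Perm.inv_eq_iff_eq]
      exact hm.symm
    | true =>
      rw [src_eq_t j hb, tgt_eq_t j hb] at hm
      simpa using hm
  -- evaluation of the product of a word suffix
  have eval : ∀ k (hk : k ≤ L),
      (List.prod ((l.drop (L-k)).map fun x => cond x.2 (σ x.1) (σ x.1)⁻¹))
        ⟨0, by omega⟩ = ⟨k, by omega⟩ := by
    intro k
    induction k with
    | zero =>
      intro _
      have hdrop : l.drop (L - 0) = [] := by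
        rw [Nat.sub_zero, hLdef]
        exact List.drop_length
      rw [hdrop]
      simp
    | succ k ih =>
      intro hk
      set j : Fin L := ⟨L - (k+1), by omega⟩ with hj
      have hjlt : L - (k+1) < l.length := by omega
      rw [List.drop_eq_getElem_cons hjlt]
      have h2 : L - (k+1) + 1 = L - k := by omega
      rw [h2, List.map_cons, List.prod_cons, Equiv.Perm.mul_apply, ih (by omega)]
      have hstep := step j
      have e1 : (⟨L - 1 - (j : ℕ), hsub1 j⟩ : Fin (L+1)) = ⟨k, by omega⟩ :=
        Fin.ext (show L - 1 - (L - (k+1)) = k by omega)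
      have e2 : (⟨L - (j : ℕ), hsub2 j⟩ : Fin (L+1)) = ⟨k+1, by omega⟩ :=
        Fin.ext (show L - (L - (k+1)) = k + 1 by omega)
      rw [e1, e2] at hstep
      exact hstep
  refine ⟨Equiv.Perm (Fin (L+1)), inferInstance, inferInstance, FreeGroup.lift σ, ?_⟩
  intro hcon
  have hw' : w = FreeGroup.mk l := (FreeGroup.mk_toWord (x := w)).symm
  have hfin : (FreeGroup.lift σ) w ⟨0, by omega⟩ = ⟨L, by omega⟩ := by
    rw [show (FreeGroup.lift σ) w = (l.map fun x => cond x.2 (σ x.1) (σ x.1)⁻¹).prod from by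
      rw [hw', FreeGroup.lift_mk]]
    have h := eval L (le_refl L)
    rw [Nat.sub_self] at h
    exact h
  rw [hcon] at hfin
  have : (0 : ℕ) = L := congrArg Fin.val hfin
  omega


open CategoryTheory

lemma exists_gen' (G : Type*) [Group G] [Group.FG G] :
    ∃ S : Finset G, Subgroup.closure (S : Set G) = ⊤ := by
  obtain ⟨m, S, _, hS⟩ := Group.fg_iff'.mp ‹Group.FG G›
  exact ⟨S, hS⟩

/-- The directed family of normal finite-index subgroups of the free group. -/
def NFI (n : ℕ) : Type := {K : Subgroup (FreeGroup (Fin n)) // K.Normal ∧ K.FiniteIndex}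

instance (n : ℕ) : PartialOrder (NFI n) := Subtype.partialOrder _

instance (n : ℕ) (K : NFI n) : K.1.Normal := K.2.1

instance (n : ℕ) (K : NFI n) : K.1.FiniteIndex := K.2.2

instance (n : ℕ) : Nonempty (NFI n) := ⟨⟨⊤, inferInstance, inferInstance⟩⟩

instance (n : ℕ) : IsDirected (NFI n) (· ≥ ·) := by
  refine ⟨fun K K' => ⟨⟨K.1 ⊓ K'.1, Subgroup.normal_inf_normal _ _, inferInstance⟩, ?_, ?_⟩⟩
  · exact (inf_le_left : K.1 ⊓ K'.1 ≤ K.1)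
  · exact (inf_le_right : K.1 ⊓ K'.1 ≤ K'.1)

/-- Projection between quotients. -/
def nfiProj {n : ℕ} {K K' : NFI n} (h : K ≤ K') :
    (FreeGroup (Fin n) ⧸ K.1) →* (FreeGroup (Fin n) ⧸ K'.1) :=
  QuotientGroup.map K.1 K'.1 (MonoidHom.id _)
    (by rwa [Subgroup.comap_id] : K.1 ≤ K'.1.comap (MonoidHom.id _))

lemma nfiProj_mk {n : ℕ} {K K' : NFI n} (h : K ≤ K') (x : FreeGroup (Fin n)) :
    nfiProj h (QuotientGroup.mk x) = QuotientGroup.mk x := by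
  haveI := K.2.1; haveI := K'.2.1
  simp [nfiProj, QuotientGroup.map_mk, MonoidHom.id_apply]

lemma nfiProj_surjective {n : ℕ} {K K' : NFI n} (h : K ≤ K') :
    Function.Surjective (nfiProj h) := by
  intro q
  induction q using QuotientGroup.induction_on with
  | H x => exact ⟨QuotientGroup.mk x, nfiProj_mk h x⟩

variable {n : ℕ}

/-- The system of "marked quotients": surjections from the free group to each finite
quotient killing `N`. -/
def Sys (N : Subgroup (FreeGroup (Fin n))) : NFI n ⥤ Type where
  obj K := {h : FreeGroup (Fin n) →* (FreeGroup (Fin n) ⧸ K.1) //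
      Function.Surjective h ∧ N ≤ h.ker}
  map {K K'} f := TypeCat.ofHom fun t => ⟨(nfiProj (leOfHom f)).comp t.1,
    (nfiProj_surjective (leOfHom f)).comp t.2.1,
    fun v hv => by
      have h1 : t.1 v = 1 := t.2.2 hv
      simp [MonoidHom.mem_ker, h1]⟩
  map_id K := by
    refine ConcreteCategory.hom_ext _ _ fun t => ?_
    apply Subtype.ext
    have hp : nfiProj (le_refl K) = MonoidHom.id _ := by
      apply MonoidHom.ext
      intro q
      induction q using QuotientGroup.induction_on with
      | H x => rw [nfiProj_mk]; rfl
    show (nfiProj _).comp t.1 = t.1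
    rw [hp, MonoidHom.id_comp]
  map_comp {K K' K''} f g := by
    refine ConcreteCategory.hom_ext _ _ fun t => ?_
    apply Subtype.ext
    show (nfiProj _).comp t.1 = (nfiProj (leOfHom g)).comp ((nfiProj (leOfHom f)).comp t.1)
    have hp : (nfiProj (leOfHom g)).comp (nfiProj (leOfHom f)) =
        nfiProj (leOfHom (f ≫ g)) := by
      apply MonoidHom.ext
      intro q
      induction q using QuotientGroup.induction_on with
      | H x => simp [MonoidHom.comp_apply, nfiProj_mk]
    rw [← hp, MonoidHom.comp_assoc]

instance finite_homs (Q' : Type) [Group Q'] [Finite Q'] :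
    Finite (FreeGroup (Fin n) →* Q') := by
  have : Function.Injective
      (fun h : FreeGroup (Fin n) →* Q' => (fun i => h (FreeGroup.of i) : Fin n → Q')) := by
    intro f g hfg
    exact FreeGroup.ext_hom f g fun a => congrFun hfg a
  exact Finite.of_injective _ this

instance sys_finite (N : Subgroup (FreeGroup (Fin n))) (K : NFI n) :
    Finite ((Sys N).obj K) := by
  have : Finite (FreeGroup (Fin n) →* (FreeGroup (Fin n) ⧸ K.1)) := finite_homs _
  exact Subtype.finite

set_option maxHeartbeats 4000000 in
/-- If the kernel is contained in a compatible family of surjections onto all finite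
quotients, then it is contained in every normal finite-index subgroup. -/
lemma ker_le_of_section (N : Subgroup (FreeGroup (Fin n)))
    (u : ∀ K : NFI n, (Sys N).obj K)
    (hu : ∀ {K K' : NFI n} (f : K ⟶ K'), (Sys N).map f (u K) = u K')
    (M : Subgroup (FreeGroup (Fin n))) (hM1 : M.Normal) (hM2 : M.FiniteIndex) :
    N ≤ M := by
  classical
  haveI := hM1; haveI := hM2
  haveI : Finite (FreeGroup (Fin n) ⧸ M) := inferInstance
  -- the finite-index data associated to a homomorphism to the fixed finite quotient
  have kerdata : ∀ f : FreeGroup (Fin n) →* (FreeGroup (Fin n) ⧸ M),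
      f.ker.Normal ∧ f.ker.FiniteIndex := by
    intro f
    refine ⟨MonoidHom.normal_ker f, ?_⟩
    have : Finite (FreeGroup (Fin n) ⧸ f.ker) :=
      Finite.of_injective _ (QuotientGroup.kerLift_injective f)
    exact Subgroup.finiteIndex_of_finite_quotient
  set KK : (FreeGroup (Fin n) →* (FreeGroup (Fin n) ⧸ M)) → NFI n :=
    fun f => ⟨f.ker, kerdata f⟩ with hKK
  set Φ : (FreeGroup (Fin n) →* (FreeGroup (Fin n) ⧸ M)) →
      (FreeGroup (Fin n) →* (FreeGroup (Fin n) ⧸ M)) :=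
    fun f => (QuotientGroup.kerLift f).comp (u (KK f)).1 with hΦ
  -- compatibility: Φ f can be computed through any smaller K
  have compat : ∀ (f : FreeGroup (Fin n) →* (FreeGroup (Fin n) ⧸ M)) (K : NFI n)
      (hK : K.1 ≤ f.ker),
      Φ f = (QuotientGroup.lift K.1 f hK).comp (u K).1 := by
    intro f K hK
    have harrow : K ≤ KK f := hK
    have hcomp := congrArg Subtype.val (hu (homOfLE harrow))
    have hcomp' : (nfiProj harrow).comp (u K).1 = (u (KK f)).1 := hcomp
    have hlift : (QuotientGroup.kerLift f).comp (nfiProj harrow) =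
        QuotientGroup.lift K.1 f hK := by
      apply MonoidHom.ext
      intro q
      induction q using QuotientGroup.induction_on with
      | H x =>
        rw [MonoidHom.comp_apply, nfiProj_mk, QuotientGroup.kerLift_mk,
          QuotientGroup.lift_mk']
    rw [hΦ]
    simp only
    rw [← hcomp', ← MonoidHom.comp_assoc, hlift]
  -- Φ is injective, hence surjective
  have hinj : Function.Injective Φ := by
    intro f g hfg
    have hkf := kerdata f
    have hkg := kerdata g
    haveI := hkf.1; haveI := hkg.1; haveI := hkf.2; haveI := hkg.2
    set K : NFI n := ⟨f.ker ⊓ g.ker, Subgroup.normal_inf_normal _ _, inferInstance⟩ with hK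
    rw [compat f K inf_le_left, compat g K inf_le_right] at hfg
    have hsurj := (u K).2.1
    have hq : QuotientGroup.lift K.1 f inf_le_left =
        QuotientGroup.lift K.1 g inf_le_right := by
      apply MonoidHom.ext
      intro q
      obtain ⟨y, rfl⟩ := hsurj q
      exact DFunLike.congr_fun hfg y
    apply MonoidHom.ext
    intro x
    have h1 := DFunLike.congr_fun hq (QuotientGroup.mk x)
    rwa [QuotientGroup.lift_mk', QuotientGroup.lift_mk'] at h1
  have hbij := (Finite.injective_iff_bijective).mp hinj
  obtain ⟨f, hf⟩ := hbij.2 (QuotientGroup.mk' M)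
  -- conclude
  intro v hv
  have h1 : (u (KK f)).1 v = 1 := (u (KK f)).2.2 hv
  have h2 : Φ f v = 1 := by
    rw [hΦ]
    simp only [MonoidHom.comp_apply, h1, map_one]
  rw [hf] at h2
  exact (QuotientGroup.eq_one_iff v).mp h2

lemma exists_epi_free {G : Type*} [Group G] [Group.FG G] {n : ℕ} (h : grpRank G ≤ n) :
    ∃ φ : FreeGroup (Fin n) →* G, Function.Surjective φ := by
  classical
  obtain ⟨S, hcard, hgen⟩ := exists_gen G
  have hlen : S.toList.length ≤ n := by rw [Finset.length_toList, hcard]; exact h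
  set f : Fin n → G := fun i => S.toList.getD i.val 1 with hf
  have hsub : (S : Set G) ⊆ Set.range f := by
    intro s hs
    have hmem : s ∈ S.toList := Finset.mem_toList.mpr hs
    obtain ⟨j, hj, hget⟩ := List.mem_iff_getElem.mp hmem
    refine ⟨⟨j, lt_of_lt_of_le hj hlen⟩, ?_⟩
    rw [hf]
    simp only
    rw [List.getD_eq_getElem?_getD, List.getElem?_eq_getElem hj]
    exact hget
  refine ⟨FreeGroup.lift f, ?_⟩
  have hr : (FreeGroup.lift f).range = ⊤ := by
    rw [FreeGroup.range_lift_eq_closure, eq_top_iff, ← hgen]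
    exact Subgroup.closure_mono hsub
  exact MonoidHom.range_eq_top.mp hr

theorem free_if_rank_detected_in_finite_quotient (Γ : Type) [Group Γ] [Group.FG Γ]
    (n : ℕ) (Q : Type) [Group Q] [Finite Q] (π : Γ →* Q)
    (hπ : Function.Surjective π) (hrank : grpRank Γ = grpRank Q)
    (hsame : ∀ (Q' : Type) [Group Q'] [Finite Q'],
      (∃ f : Γ →* Q', Function.Surjective f) ↔
      (∃ f : FreeGroup (Fin n) →* Q', Function.Surjective f)) :
    Nonempty (Γ ≃* FreeGroup (Fin n)) := by
  classical
  have hFgen : Subgroup.closure ((Finset.univ.image (FreeGroup.of : Fin n → _) : Finset _) :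
      Set (FreeGroup (Fin n))) = ⊤ := by
    rw [Finset.coe_image, Finset.coe_univ, Set.image_univ, FreeGroup.closure_range_of]
  haveI : Group.FG (FreeGroup (Fin n)) := ⟨⟨Finset.univ.image FreeGroup.of, hFgen⟩⟩
  have hrankF : grpRank (FreeGroup (Fin n)) ≤ n :=
    le_trans (grpRank_le _ hFgen) (le_trans Finset.card_image_le (le_of_eq (by simp)))
  obtain ⟨g, hg⟩ := (hsame Q).mp ⟨π, hπ⟩
  have hQn : grpRank Q ≤ n := le_trans (grpRank_quotient_le g hg) hrankF
  have hΓn : grpRank Γ ≤ n := by rw [hrank]; exact hQn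
  obtain ⟨φ, hφ⟩ := exists_epi_free hΓn
  set N := φ.ker with hNdef
  haveI : ∀ K : NFI n, Nonempty ((Sys N).obj K) := by
    intro K
    obtain ⟨ψ, hψ⟩ := (hsame (FreeGroup (Fin n) ⧸ K.1)).mpr
      ⟨QuotientGroup.mk' K.1, QuotientGroup.mk'_surjective K.1⟩
    refine ⟨⟨ψ.comp φ, hψ.comp hφ, fun v hv => ?_⟩⟩
    have h1 : φ v = 1 := hv
    simp [MonoidHom.mem_ker, MonoidHom.comp_apply, h1]
  obtain ⟨u, hu⟩ := nonempty_sections_of_finite_cofiltered_system (Sys N)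
  have key : ∀ (M : Subgroup (FreeGroup (Fin n))), M.Normal → M.FiniteIndex → N ≤ M :=
    fun M h1 h2 => ker_le_of_section N u (fun f => hu f) M h1 h2
  have hNbot : N = ⊥ := by
    rw [eq_bot_iff]
    intro w hw
    rw [Subgroup.mem_bot]
    by_contra hne
    obtain ⟨P, hPg, hPf, ρ, hρ⟩ := freeGroup_rf w hne
    haveI h1 : Finite (FreeGroup (Fin n) ⧸ ρ.ker) :=
      Finite.of_injective _ (QuotientGroup.kerLift_injective ρ)
    have h2 := key ρ.ker (MonoidHom.normal_ker ρ)
      (Subgroup.finiteIndex_of_finite_quotient) hw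
    exact hρ h2
  have hinj : Function.Injective φ := (MonoidHom.ker_eq_bot_iff φ).mp hNbot
  exact ⟨(MulEquiv.ofBijective φ ⟨hinj, hφ⟩).symm⟩
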